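/- (Warfield) Let G be a module over Z_p (the integers localized at a prime p) with decomposition bases X and Y. Then for every equivalence class e of Ulm sequences, the cardinality of {x ∈ X : U(x) ∈ e} equals the cardinality of {y ∈ Y : U(y) ∈ e}; i.e. the Warfield invariant w(e,G) is independent of the choice of decomposition basis. -/

import Mathlib

noncomputable section

namespace UlmW

universe u

variable {R : Type*} [CommRing R]

/-- The submodule `p^α M`, defined by transfinite recursion on `α`. -/
def ppow {M : Type u} [AddCommGroup M] [Module R M] (p : R) (α : Ordinal.{u}) :
    Submodule R M :=
  Ordinal.limitRecOn α ⊤ (fun _ S => Submodule.map (LinearMap.lsmul R M p) S)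
    fun β _ ih => ⨅ (γ : Set.Iio β), ih γ.1 γ.2

open scoped Classical in
/-- The `p`-height of `x`, with `⊤` playing the role of `∞`. -/
def pheight {M : Type u} [AddCommGroup M] [Module R M] (p : R) (x : M) :
    WithTop Ordinal.{u} :=
  if h : ∃ α : Ordinal.{u}, x ∈ ppow p α ∧ x ∉ ppow p (α + 1) then (h.choose : WithTop Ordinal)
  else ⊤

/-- `H⁰ = {x : ∃ a ≠ 0, a • x ∈ H}`. -/
def hull {M : Type u} [AddCommGroup M] [Module R M] (H : Submodule R M) : Set M :=
  {x | ∃ a : R, a ≠ 0 ∧ a • x ∈ H}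

/-- `X` is a decomposition set with respect to the single prime `p`. -/
def IsDecompWrt {M : Type u} [AddCommGroup M] [Module R M] (p : R) (X : Set M) : Prop :=
  (LinearIndependent R (fun x : X => (x : M))) ∧
  (∀ x ∈ X, ∀ a : R, a ≠ 0 → a • x ≠ 0) ∧
  (∀ s : Finset M, ↑s ⊆ X → ∀ c : M → R,
    pheight p (∑ x ∈ s, c x • x) = s.inf fun x => pheight p (c x • x))

/-- `X` is a decomposition set (with respect to every prime of `R`). -/
def IsDecompositionSet (R : Type*) [CommRing R] {M : Type u} [AddCommGroup M] [Module R M]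
    (X : Set M) : Prop :=
  ∀ p : R, Prime p → IsDecompWrt p X

/-- partial decomposition basis, heights taken w.r.t. a fixed prime `p`. -/
def IsPDBWrt {M : Type u} [AddCommGroup M] [Module R M] (p : R) (C : Set (Set M)) : Prop :=
  C.Nonempty ∧ (∀ X ∈ C, X.Finite) ∧ (∀ X ∈ C, IsDecompWrt p X) ∧
  ∀ X ∈ C, ∀ x : M, ∃ Y ∈ C, X ⊆ Y ∧ x ∈ hull (Submodule.span R Y)

/-- partial decomposition basis (heights w.r.t. all primes of `R`). -/
def IsPDB (R : Type*) [CommRing R] {M : Type u} [AddCommGroup M] [Module R M] (C : Set (Set M)) : Prop :=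
  C.Nonempty ∧ (∀ X ∈ C, X.Finite) ∧ (∀ X ∈ C, IsDecompositionSet R X) ∧
  ∀ X ∈ C, ∀ x : M, ∃ Y ∈ C, X ⊆ Y ∧ x ∈ hull (Submodule.span R Y)

/-- A partial isomorphism system `I : G ≅_p H`. -/
def IsPartialIsoSystem {M N : Type*} [AddCommGroup M] [Module R M]
    [AddCommGroup N] [Module R N] (I : Set (M →ₗ.[R] N)) : Prop :=
  I.Nonempty ∧
  (∀ f ∈ I, Function.Injective f.toFun) ∧
  (∀ f ∈ I, ∀ a : M, ∃ g ∈ I, f ≤ g ∧ a ∈ g.domain) ∧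
  (∀ f ∈ I, ∀ b : N, ∃ g ∈ I, f ≤ g ∧ ∃ y : g.domain, g y = b)

/-- The Ulm sequence of `x`: `U(x) = (|pⁱ x|)ᵢ`. -/
def UlmSeqOf {M : Type u} [AddCommGroup M] [Module R M] (p : R) (x : M) :
    ℕ → WithTop Ordinal.{u} :=
  fun i => pheight p ((p ^ i) • x)

/-- `u` is an Ulm sequence. -/
def IsUlmSeq (u : ℕ → WithTop Ordinal.{u}) : Prop :=
  ∀ i, (u i = ⊤ → u (i + 1) = ⊤) ∧ (u i ≠ ⊤ → u i < u (i + 1))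

/-- Equivalence of Ulm sequences. -/
def UlmEquiv (u v : ℕ → WithTop Ordinal.{u}) : Prop :=
  ∃ m n : ℕ, ∀ i, u (i + n) = v (i + m)

/-- `X` contains at least `n` elements whose Ulm sequence is equivalent to `u`. -/
def HasAtLeast {M : Type u} [AddCommGroup M] [Module R M] (p : R)
    (u : ℕ → WithTop Ordinal.{u}) (n : ℕ) (X : Set M) : Prop :=
  ∃ s : Finset M, ↑s ⊆ X ∧ n ≤ s.card ∧ ∀ x ∈ s, UlmEquiv (UlmSeqOf p x) u

/-- `ŵ_C(e,G)` where `e` is the class of the Ulm sequence `u`. -/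
def wHat {M : Type u} [AddCommGroup M] [Module R M] (p : R) (C : Set (Set M))
    (u : ℕ → WithTop Ordinal.{u}) : ℕ∞ :=
  sSup {N : ℕ∞ | ∃ n : ℕ, N = (n : ℕ∞) ∧ ∃ X ∈ C, HasAtLeast p u n X}

/-- `x` is proper with respect to `S`. -/
def IsProper {M : Type u} [AddCommGroup M] [Module R M] (p : R) (S : Submodule R M)
    (x : M) : Prop :=
  ∀ s ∈ S, pheight p (x + s) ≤ pheight p x

/-- `H` is a nice submodule. -/
def IsNice {M : Type u} [AddCommGroup M] [Module R M] (p : R) (H : Submodule R M) : Prop :=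
  ∀ x : M, ∃ h ∈ H, ∀ h' ∈ H, pheight p (x + h') ≤ pheight p (x + h)

/-- The Ulm invariant `u_p(σ, M)`: the dimension of `(p^σ M)[p]/(p^{σ+1} M)[p]`
over the residue field `R/(p)`. -/
def uCard (p : R) (M : Type u) [AddCommGroup M] [Module R M] (σ : Ordinal.{u}) :
    Cardinal :=
  let V : Submodule R M := ppow p σ ⊓ Submodule.torsionBy R M p
  let W : Submodule R V := (ppow p (σ + 1) ⊓ Submodule.torsionBy R M p).comap V.subtype
  Module.rank (R ⧸ Ideal.span {p})
    ((V ⧸ W) ⧸ (Ideal.span {p} • (⊤ : Submodule R (V ⧸ W))))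

/-- `û_p(σ, M) = min (u_p(σ, M), ω)`. -/
def uHat (p : R) (M : Type u) [AddCommGroup M] [Module R M] (σ : Ordinal.{u}) : Cardinal :=
  min (uCard p M σ) Cardinal.aleph0

/-- `û_p(∞, M) = min (dim (p^∞ M)[p], ω)`. -/
def uHatInf (p : R) (M : Type u) [AddCommGroup M] [Module R M] : Cardinal :=
  let V : Submodule R M := (⨅ α : Ordinal.{u}, ppow p α) ⊓ Submodule.torsionBy R M p
  min (Module.rank (R ⧸ Ideal.span {p})
    (V ⧸ (Ideal.span {p} • (⊤ : Submodule R V)))) Cardinal.aleph0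

end UlmW

open UlmW

/-- The ideal `(p) ⊆ ℤ` is prime. -/
instance zpSpanPrime (p : ℤ) [hp : Fact (Prime p)] : (Ideal.span {p} : Ideal ℤ).IsPrime :=
  (Ideal.span_singleton_prime hp.out.ne_zero).mpr hp.out

/-- `ℤ_(p)`, the integers localized at the prime `p`. -/
abbrev Zp (p : ℤ) [Fact (Prime p)] : Type :=
  Localization.AtPrime (Ideal.span {p} : Ideal ℤ)


universe u

open UlmW


namespace UlmW

universe v

variable {R : Type*} [CommRing R]

section Heights

variable {M : Type u} [AddCommGroup M] [Module R M] {p : R}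

theorem ppow_zero (p : R) : (ppow p 0 : Submodule R M) = ⊤ := by
  unfold ppow; rw [Ordinal.limitRecOn_zero]

theorem ppow_succ (p : R) (α : Ordinal.{u}) :
    (ppow p (α + 1) : Submodule R M)
      = Submodule.map (LinearMap.lsmul R M p) (ppow p α) := by
  unfold ppow
  rw [Ordinal.add_one_eq_succ, Ordinal.limitRecOn_succ]

theorem ppow_limit (p : R) {α : Ordinal.{u}} (h : Order.IsSuccLimit α) :
    (ppow p α : Submodule R M) = ⨅ (γ : Set.Iio α), ppow p γ.1 := by
  unfold ppow
  rw [Ordinal.limitRecOn_limit _ _ _ _ h]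

theorem smul_mem_ppow_succ {x : M} {α : Ordinal.{u}} (h : x ∈ ppow p α) :
    p • x ∈ ppow p (α + 1) := by
  rw [ppow_succ]
  exact ⟨x, h, rfl⟩

theorem ppow_succ_le (p : R) (α : Ordinal.{u}) :
    (ppow p (α + 1) : Submodule R M) ≤ ppow p α := by
  rw [ppow_succ]
  rintro x ⟨y, hy, rfl⟩
  exact Submodule.smul_mem _ _ hy

theorem ppow_antitone {α β : Ordinal.{u}} (h : α ≤ β) :
    (ppow p β : Submodule R M) ≤ ppow p α := by
  induction β using Ordinal.induction with
  | h β IH =>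
    rcases Ordinal.zero_or_succ_or_isSuccLimit β with hβ | ⟨b, hβ⟩ | hβ
    · subst hβ; obtain rfl : α = 0 := le_antisymm (by simpa using h) zero_le
      exact le_rfl
    · subst hβ
      rcases eq_or_lt_of_le h with rfl | hlt
      · exact le_rfl
      · have hαb : α ≤ b := Order.lt_succ_iff.mp hlt
        have h1 : (ppow p (b+1) : Submodule R M) ≤ ppow p b := ppow_succ_le p b
        rw [Ordinal.add_one_eq_succ] at h1
        exact h1.trans (IH b (Order.lt_succ b) hαb)
    · rcases eq_or_lt_of_le h with rfl | hlt
      · exact le_rfl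
      · rw [ppow_limit p hβ]
        exact iInf_le (fun (γ : Set.Iio β) => (ppow p γ.1 : Submodule R M)) ⟨α, hlt⟩

theorem ppow_coe_unique {x : M} {α β : Ordinal.{u}}
    (hα : x ∈ ppow p α ∧ x ∉ ppow p (α + 1)) (hβ : x ∈ ppow p β ∧ x ∉ ppow p (β + 1)) :
    α = β := by
  rcases lt_trichotomy α β with h | h | h
  · exfalso
    have : (ppow p β : Submodule R M) ≤ ppow p (α + 1) :=
      ppow_antitone (by rw [Ordinal.add_one_eq_succ]; exact Order.succ_le_of_lt h)
    exact hα.2 (this hβ.1)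
  · exact h
  · exfalso
    have : (ppow p α : Submodule R M) ≤ ppow p (β + 1) :=
      ppow_antitone (by rw [Ordinal.add_one_eq_succ]; exact Order.succ_le_of_lt h)
    exact hβ.2 (this hα.1)

theorem pheight_eq_coe {x : M} {α : Ordinal.{u}} (h1 : x ∈ ppow p α)
    (h2 : x ∉ ppow p (α + 1)) : pheight p x = (α : WithTop Ordinal.{u}) := by
  classical
  have hex : ∃ γ : Ordinal.{u}, x ∈ ppow p γ ∧ x ∉ ppow p (γ + 1) := ⟨α, h1, h2⟩
  unfold pheight
  rw [dif_pos hex]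
  exact congrArg (fun o : Ordinal.{u} => (o : WithTop Ordinal.{u}))
    (ppow_coe_unique hex.choose_spec ⟨h1, h2⟩)

theorem pheight_spec {x : M} (h : pheight p x ≠ ⊤) :
    ∃ α : Ordinal.{u}, pheight p x = (α : WithTop Ordinal.{u}) ∧
      x ∈ ppow p α ∧ x ∉ ppow p (α + 1) := by
  classical
  by_cases hex : ∃ α : Ordinal.{u}, x ∈ ppow p α ∧ x ∉ ppow p (α + 1)
  · refine ⟨hex.choose, ?_, hex.choose_spec⟩
    unfold pheight
    rw [dif_pos hex]
  · exfalso; apply h; unfold pheight; rw [dif_neg hex]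

theorem pheight_eq_top_of_forall {x : M} (h : ∀ α : Ordinal.{u}, x ∈ ppow p α) :
    pheight p x = ⊤ := by
  classical
  unfold pheight
  rw [dif_neg]
  rintro ⟨α, _, h2⟩
  exact h2 (h _)

theorem forall_of_pheight_eq_top {x : M} (h : pheight p x = ⊤) :
    ∀ α : Ordinal.{u}, x ∈ ppow p α := by
  classical
  have hex : ¬ ∃ α : Ordinal.{u}, x ∈ ppow p α ∧ x ∉ ppow p (α + 1) := by
    intro hex
    have hh : pheight p x = ((hex.choose : Ordinal.{u}) : WithTop Ordinal.{u}) := by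
      unfold pheight; rw [dif_pos hex]
    rw [h] at hh
    exact WithTop.top_ne_coe hh
  intro α
  induction α using Ordinal.induction with
  | h α IH =>
    rcases Ordinal.zero_or_succ_or_isSuccLimit α with hα | ⟨a, hα⟩ | hα
    · subst hα; rw [ppow_zero]; trivial
    · subst hα
      have hax : x ∈ ppow p a := IH a (Order.lt_succ a)
      by_contra hnot
      rw [← Ordinal.add_one_eq_succ] at hnot
      exact hex ⟨a, hax, hnot⟩
    · rw [ppow_limit p hα]
      exact Submodule.mem_iInf _ |>.mpr fun γ => IH γ.1 γ.2

theorem pheight_smul_eq_top {x : M} (h : pheight p x = ⊤) :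
    pheight p (p • x) = ⊤ := by
  apply pheight_eq_top_of_forall
  intro α
  exact Submodule.smul_mem _ _ (forall_of_pheight_eq_top h α)

theorem pheight_lt_pheight_smul {x : M} (h : pheight p x ≠ ⊤) :
    pheight p x < pheight p (p • x) := by
  obtain ⟨α, hα, hmem, _⟩ := pheight_spec h
  have hpx : p • x ∈ ppow p (α + 1) := smul_mem_ppow_succ hmem
  rw [hα]
  by_cases h' : pheight p (p • x) = ⊤
  · rw [h']; exact WithTop.coe_lt_top α
  · obtain ⟨β, hβ, _, hmem2'⟩ := pheight_spec h'
    rw [hβ, WithTop.coe_lt_coe]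
    by_contra hle
    push_neg at hle
    have : (ppow p (α + 1) : Submodule R M) ≤ ppow p (β + 1) :=
      ppow_antitone (by exact add_le_add_left hle 1)
    exact hmem2' (this hpx)

theorem pheight_unit_smul (u : Rˣ) (x : M) :
    pheight p ((u : R) • x) = pheight p x := by
  have key : ∀ α : Ordinal.{u}, ((u : R) • x ∈ ppow p α ↔ x ∈ ppow p α) := by
    intro α
    constructor
    · intro h
      have := Submodule.smul_mem (ppow p α) ((u⁻¹ : Rˣ) : R) h
      rwa [smul_smul, Units.inv_mul, one_smul] at this
    · intro h
      exact Submodule.smul_mem _ _ h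
  by_cases h : pheight p x = ⊤
  · rw [h]
    exact pheight_eq_top_of_forall fun α => (key α).mpr (forall_of_pheight_eq_top h α)
  · obtain ⟨α, hα, h1, h2⟩ := pheight_spec h
    rw [hα]
    exact pheight_eq_coe ((key α).mpr h1) (fun hc => h2 ((key (α + 1)).mp hc))

end Heights

end UlmW

open UlmW

section ZpFacts

variable (p : ℤ) [hp : Fact (Prime p)]

theorem zp_dvr : IsDiscreteValuationRing (Zp p) := by
  have h := (inferInstance : IsDedekindDomainDvr ℤ)
  refine h.is_dvr_at_nonzero_prime _ ?_ inferInstance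
  simp [Ideal.span_singleton_eq_bot, hp.out.ne_zero]

theorem zp_pi_ne_zero : (p : Zp p) ≠ 0 := by
  have hinj : Function.Injective (algebraMap ℤ (Zp p)) :=
    IsLocalization.injective (Zp p)
      (Ideal.span {p} : Ideal ℤ).primeCompl_le_nonZeroDivisors
  have : algebraMap ℤ (Zp p) p ≠ algebraMap ℤ (Zp p) 0 :=
    fun hc => hp.out.ne_zero (hinj hc)
  simpa using this

theorem zp_irred : Irreducible ((p : Zp p)) := by
  refine IsDiscreteValuationRing.irreducible_of_span_eq_maximalIdeal _ (zp_pi_ne_zero p) ?_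
  have h1 := Localization.AtPrime.map_eq_maximalIdeal (I := (Ideal.span {p} : Ideal ℤ))
  rw [← h1, Ideal.map_span, Set.image_singleton]
  norm_num

theorem zp_factor {a : Zp p} (ha : a ≠ 0) :
    ∃ (w : ℕ) (u : (Zp p)ˣ), a = u * (p : Zp p) ^ w := by
  have := zp_dvr p
  obtain ⟨n, u, h⟩ := IsDiscreteValuationRing.eq_unit_mul_pow_irreducible ha (zp_irred p)
  exact ⟨n, u, h⟩

theorem pow_dvd_unit_mul_pow {R : Type*} [CommRing R] [IsDomain R] {π : R}
    (hπ : Irreducible π) (u : Rˣ) {l m : ℕ} (h : π ^ l ∣ (u : R) * π ^ m) : l ≤ m := by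
  by_contra hlt
  push_neg at hlt
  obtain ⟨c, hc⟩ := h
  have hπ0 : π ≠ 0 := hπ.ne_zero
  have hml : l = m + (l - m) := by omega
  rw [hml, pow_add] at hc
  have hcan : (u : R) = π ^ (l - m) * c := by
    have h2 : π ^ m * (u : R) = π ^ m * (π ^ (l - m) * c) := by
      linear_combination hc
    exact mul_left_cancel₀ (pow_ne_zero m hπ0) h2
  have hdvd : π ∣ (u : R) := by
    rw [hcan]
    have : (1:ℕ) ≤ l - m := by omega
    exact Dvd.dvd.mul_right (dvd_pow_self π (by omega : l - m ≠ 0)) c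
  exact hπ.not_isUnit (isUnit_of_dvd_unit hdvd u.isUnit)


end ZpFacts


section MainKey

open UlmW

set_option maxHeartbeats 2000000 in
theorem key_le (p : ℤ) [hp : Fact (Prime p)] {G : Type u} [AddCommGroup G]
    [Module (Zp p) G]
    (X Y : Set G)
    (hX : IsDecompWrt (p : Zp p) X)
    (hXbasis : ∀ g : G, ∃ a : Zp p, a ≠ 0 ∧ a • g ∈ Submodule.span (Zp p) X)
    (hY : IsDecompWrt (p : Zp p) Y)
    (hYbasis : ∀ g : G, ∃ a : Zp p, a ≠ 0 ∧ a • g ∈ Submodule.span (Zp p) Y)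
    (e : ℕ → WithTop Ordinal.{u}) (he : IsUlmSeq e) :
    Cardinal.mk {z : G // z ∈ X ∧ UlmEquiv (UlmSeqOf (p : Zp p) z) e} ≤
      Cardinal.mk {z : G // z ∈ Y ∧ UlmEquiv (UlmSeqOf (p : Zp p) z) e} := by
  classical
  haveI := zp_dvr p
  set π : Zp p := (p : Zp p) with hπdef
  -- choice of Y-expansions
  have hchY : ∀ g : G, ∃ ac : (Zp p) × (G →₀ Zp p), ac.1 ≠ 0 ∧ (↑ac.2.support : Set G) ⊆ Y ∧
      (ac.2.sum fun y r => r • y) = ac.1 • g := by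
    intro g
    obtain ⟨a, ha, hmem⟩ := hYbasis g
    obtain ⟨c, hc1, hc2⟩ := Submodule.mem_span_set.mp hmem
    exact ⟨⟨a, c⟩, ha, hc1, hc2⟩
  choose acY hacY0 hacYsupp hacYsum using hchY
  have hchX : ∀ g : G, ∃ ac : (Zp p) × (G →₀ Zp p), ac.1 ≠ 0 ∧ (↑ac.2.support : Set G) ⊆ X ∧
      (ac.2.sum fun y r => r • y) = ac.1 • g := by
    intro g
    obtain ⟨a, ha, hmem⟩ := hXbasis g
    obtain ⟨c, hc1, hc2⟩ := Submodule.mem_span_set.mp hmem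
    exact ⟨⟨a, c⟩, ha, hc1, hc2⟩
  choose acX hacX0 hacXsupp hacXsum using hchX
  set T : {z : G // z ∈ X ∧ UlmEquiv (UlmSeqOf π z) e} →
      Finset {z : G // z ∈ Y ∧ UlmEquiv (UlmSeqOf π z) e} :=
    fun z => ((acY (z : G)).2.support).subtype
      (fun y => y ∈ Y ∧ UlmEquiv (UlmSeqOf π y) e) with hT
  suffices hall : ∀ s : Finset {z : G // z ∈ X ∧ UlmEquiv (UlmSeqOf π z) e},
      s.card ≤ (s.biUnion T).card by
    obtain ⟨f, hfinj, -⟩ := (Finset.all_card_le_biUnion_card_iff_exists_injective T).mp hall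
    exact Cardinal.mk_le_of_injective hfinj
  intro s
  by_contra hlt
  push_neg at hlt
  set sG : Finset G := s.image Subtype.val with hsG
  have hsGcard : sG.card = s.card := Finset.card_image_of_injective _ Subtype.val_injective
  have hsGX : ↑sG ⊆ X := by
    intro g hg
    obtain ⟨z, _, rfl⟩ := Finset.mem_image.mp hg
    exact z.2.1
  have hsGP : ∀ g ∈ sG, UlmEquiv (UlmSeqOf π g) e := by
    intro g hg
    obtain ⟨z, _, rfl⟩ := Finset.mem_image.mp hg
    exact z.2.2
  set NT := s.biUnion T with hNT
  set NG : Finset G := NT.image Subtype.val with hNG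
  have hNGcard : NG.card < sG.card := by
    rw [hsGcard]
    exact lt_of_le_of_lt Finset.card_image_le hlt
  -- fraction field and kernel vector
  set K := FractionRing (Zp p) with hK
  letI : Algebra (Zp p) K := OreLocalization.instAlgebra
  have halginj : Function.Injective (algebraMap (Zp p) K) := IsFractionRing.injective _ _
  set Mx : Matrix ↥NG ↥sG K := fun y x => algebraMap (Zp p) K ((acY (x : G)).2 (y : G)) with hMx
  have hnoninj : ¬ Function.Injective (Matrix.mulVecLin Mx) := by
    intro hinj
    have hle := LinearMap.finrank_le_finrank_of_injective hinj
    rw [Module.finrank_pi, Module.finrank_pi, Fintype.card_coe, Fintype.card_coe] at hle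
    omega
  obtain ⟨w, hw0, hLw⟩ : ∃ w : ↥sG → K, w ≠ 0 ∧ Matrix.mulVecLin Mx w = 0 := by
    by_contra hno
    push_neg at hno
    apply hnoninj
    intro a b hab
    by_contra hne
    refine hno (a - b) (sub_ne_zero.mpr hne) ?_
    rw [map_sub, hab, sub_self]
  obtain ⟨bd, hbd⟩ := IsLocalization.exist_integer_multiples
    (nonZeroDivisors (Zp p)) Finset.univ w
  have hbd' : ∀ x : ↥sG, ∃ r : Zp p, algebraMap (Zp p) K r = (bd : Zp p) • w x := by
    intro x
    exact hbd x (Finset.mem_univ x)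
  choose γv hγv using hbd'
  set γG : G → Zp p := fun g => if h : g ∈ sG then γv ⟨g, h⟩ else 0 with hγG
  have hγGv : ∀ x : ↥sG, γG (x : G) = γv x := by
    intro x
    rw [hγG]
    simp only [x.2, dif_pos]
  obtain ⟨x₁, hx₁⟩ : ∃ x : ↥sG, w x ≠ 0 := by
    by_contra hc
    push_neg at hc
    exact hw0 (funext hc)
  have hbdne : algebraMap (Zp p) K (bd : Zp p) ≠ 0 := by
    intro hc
    have := halginj (hc.trans (map_zero _).symm)
    exact nonZeroDivisors.coe_ne_zero bd this
  have hγx₁ : γv x₁ ≠ 0 := by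
    intro h0
    apply hx₁
    have h1 := hγv x₁
    rw [h0, map_zero, Algebra.smul_def] at h1
    rcases mul_eq_zero.mp h1.symm with h2 | h2
    · exact absurd h2 hbdne
    · exact h2
  have hrel : ∀ yg : G, ∀ hyg : yg ∈ NG, (∑ g ∈ sG, γG g * (acY g).2 yg) = 0 := by
    intro yg hyg
    apply halginj
    rw [map_zero, map_sum]
    rw [← Finset.sum_attach sG (fun g => algebraMap (Zp p) K (γG g * (acY g).2 yg))]
    have hstep : ∀ x ∈ sG.attach, algebraMap (Zp p) K (γG (x : G) * (acY (x : G)).2 yg)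
        = algebraMap (Zp p) K (bd : Zp p) * (Mx ⟨yg, hyg⟩ x * w x) := by
      intro x _
      rw [map_mul, hγGv x, hγv x, Algebra.smul_def]
      ring
    rw [Finset.sum_congr rfl hstep, ← Finset.mul_sum]
    have hdot : ∑ x ∈ sG.attach, Mx ⟨yg, hyg⟩ x * w x = 0 := by
      have h0 := congrFun hLw ⟨yg, hyg⟩
      rw [Matrix.mulVecLin_apply] at h0
      rw [← Finset.univ_eq_attach]
      exact h0
    rw [hdot, mul_zero]
  -- the combination element
  set rr : G → Zp p := fun g => γG g * (acY g).1 with hrr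
  set s'' : Finset G := sG.filter (fun g => γG g ≠ 0) with hs''
  have hs''sub : s'' ⊆ sG := Finset.filter_subset _ _
  have hs''X : ↑s'' ⊆ X := fun g hg => hsGX (hs''sub hg)
  have hs''ne : s''.Nonempty := by
    refine ⟨(x₁ : G), Finset.mem_filter.mpr ⟨x₁.2, ?_⟩⟩
    rw [hγGv x₁]
    exact hγx₁
  have hrr0 : ∀ g ∈ s'', rr g ≠ 0 := by
    intro g hg
    exact mul_ne_zero (Finset.mem_filter.mp hg).2 (hacY0 g)
  set zs : G := ∑ g ∈ s'', rr g • g with hzs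
  set UN : Finset G := sG.biUnion (fun g => (acY g).2.support) with hUN
  set B : G → Zp p := fun y => ∑ g ∈ sG, γG g * (acY g).2 y with hB
  set SB : Finset G := UN.filter (fun y => B y ≠ 0) with hSB
  have hSBY : ↑SB ⊆ Y := by
    intro y hy
    obtain ⟨g, _, hg2⟩ := Finset.mem_biUnion.mp (Finset.mem_filter.mp hy).1
    exact hacYsupp g hg2
  -- identity I1 : zs = ∑ y ∈ SB, B y • y
  have hI1 : zs = ∑ y ∈ SB, B y • y := by
    have e1 : zs = ∑ g ∈ sG, rr g • g := by
      rw [hzs, hs'']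
      refine Finset.sum_filter_of_ne ?_
      intro g _ hne h0
      apply hne
      have : rr g = 0 := by simp only [hrr, h0, zero_mul]
      rw [this, zero_smul]
    have e2 : ∀ g ∈ sG, rr g • g = ∑ y ∈ UN, (γG g * (acY g).2 y) • y := by
      intro g hg
      have e2a : rr g • g = γG g • ((acY g).1 • g) := by
        simp only [hrr, mul_smul]
      rw [e2a, ← hacYsum g, Finsupp.sum, Finset.smul_sum]
      rw [Finset.sum_subset (Finset.subset_biUnion_of_mem (fun g => (acY g).2.support) hg)
        (by intro y _ hy; rw [Finsupp.notMem_support_iff.mp hy, zero_smul, smul_zero])]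
      refine Finset.sum_congr rfl ?_
      intro y _
      rw [smul_smul]
    have e3 : zs = ∑ y ∈ UN, B y • y := by
      rw [e1, Finset.sum_congr rfl e2, Finset.sum_comm]
      refine Finset.sum_congr rfl ?_
      intro y _
      rw [hB, Finset.sum_smul]
    rw [e3, hSB]
    refine (Finset.sum_filter_of_ne ?_).symm
    intro y _ hne h0
    apply hne
    rw [h0, zero_smul]
  have hSBnotP : ∀ y ∈ SB, ¬ UlmEquiv (UlmSeqOf π y) e := by
    intro y hy hPy
    have hymem := Finset.mem_filter.mp hy
    obtain ⟨g, hgsG, hgsupp⟩ := Finset.mem_biUnion.mp hymem.1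
    obtain ⟨z, hzs', hzval⟩ := Finset.mem_image.mp hgsG
    have hyY : y ∈ Y := hacYsupp g hgsupp
    have hyNG : y ∈ NG := by
      rw [hNG]
      refine Finset.mem_image.mpr ⟨⟨y, hyY, hPy⟩, ?_, rfl⟩
      rw [hNT]
      refine Finset.mem_biUnion.mpr ⟨z, hzs', ?_⟩
      rw [hT]
      refine Finset.mem_subtype.mpr ?_
      rw [hzval]
      exact hgsupp
    exact hymem.2 (hrel y hyNG)
  -- linear independence helper
  have hindep : ∀ (t : Finset G), ↑t ⊆ X → ∀ cf : G → Zp p,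
      (∑ g ∈ t, cf g • g) = 0 → ∀ g ∈ t, cf g = 0 := by
    intro t ht cf hsum g₀ hg₀
    set l : G →₀ Zp p := Finsupp.onFinset t (fun g => if g ∈ t then cf g else 0)
      (by intro g hg; by_contra hc; simp [hc] at hg) with hl
    have hlsupp : l ∈ Finsupp.supported (Zp p) (Zp p) X := by
      rw [Finsupp.mem_supported]
      refine Set.Subset.trans ?_ ht
      intro g hg
      have := Finsupp.support_onFinset_subset hg
      exact this
    have hlcomb : Finsupp.linearCombination (Zp p) id l = 0 := by
      rw [Finsupp.linearCombination_apply]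
      rw [Finsupp.sum_of_support_subset l (Finsupp.support_onFinset_subset) _
        (by intro g _; rw [zero_smul])]
      rw [← hsum]
      refine Finset.sum_congr rfl ?_
      intro g hg
      rw [hl]
      simp [Finsupp.onFinset_apply, hg]
    have hl0 : l = 0 := (linearIndepOn_iff (v := id)).mp hX.1 l hlsupp hlcomb
    have := congrArg (fun f : G →₀ Zp p => f g₀) hl0
    simpa [hl, Finsupp.onFinset_apply, hg₀] using this
  have hzs0 : zs ≠ 0 := by
    intro h0
    have := hindep s'' hs''X rr h0 (x₁ : G) (Finset.mem_filter.mpr ⟨x₁.2, by rw [hγGv x₁]; exact hγx₁⟩)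
    exact hrr0 (x₁ : G) (Finset.mem_filter.mpr ⟨x₁.2, by rw [hγGv x₁]; exact hγx₁⟩) this
  have hSBne : SB.Nonempty := by
    rcases Finset.eq_empty_or_nonempty SB with hSBe | h
    · exfalso; apply hzs0; rw [hI1, hSBe, Finset.sum_empty]
    · exact h
  -- the two expansions of the Ulm sequence of zs
  have hzsU : ∀ i : ℕ, UlmSeqOf π zs i = s''.inf (fun g => pheight π ((π ^ i * rr g) • g)) := by
    intro i
    have h1 : (π ^ i) • zs = ∑ g ∈ s'', (π ^ i * rr g) • g := by
      rw [hzs, Finset.smul_sum]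
      refine Finset.sum_congr rfl ?_
      intro g _
      rw [smul_smul]
    have h2 := hX.2.2 s'' hs''X (fun g => π ^ i * rr g)
    simp only [UlmSeqOf]
    rw [h1]
    exact h2
  have hzsUY : ∀ i : ℕ, UlmSeqOf π zs i = SB.inf (fun y => pheight π ((π ^ i * B y) • y)) := by
    intro i
    have h1 : (π ^ i) • zs = ∑ y ∈ SB, (π ^ i * B y) • y := by
      rw [hI1, Finset.smul_sum]
      refine Finset.sum_congr rfl ?_
      intro y _
      rw [smul_smul]
    have h2 := hY.2.2 SB hSBY (fun y => π ^ i * B y)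
    simp only [UlmSeqOf]
    rw [h1]
    exact h2
  -- pheight of scaled terms
  have hterm : ∀ (a : Zp p) (ww : ℕ) (uu : (Zp p)ˣ), a = ↑uu * π ^ ww → ∀ (i : ℕ) (x : G),
      pheight π ((π ^ i * a) • x) = UlmSeqOf π x (i + ww) := by
    intro a ww uu hu i x
    have h1 : π ^ i * a = ↑uu * π ^ (i + ww) := by rw [hu]; ring
    rw [h1, mul_smul]
    simp only [UlmSeqOf]
    exact pheight_unit_smul uu _
  -- factorizations
  have hfacB : ∀ y : G, ∃ wu : ℕ × (Zp p)ˣ, y ∈ SB → B y = ↑wu.2 * π ^ wu.1 := by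
    intro y
    by_cases hy : y ∈ SB
    · obtain ⟨ww, uu, h⟩ := zp_factor p ((Finset.mem_filter.mp hy).2)
      exact ⟨⟨ww, uu⟩, fun _ => h⟩
    · exact ⟨⟨0, 1⟩, fun h => absurd h hy⟩
  choose bwf hbwf using hfacB
  have hfacR : ∀ g : G, ∃ wu : ℕ × (Zp p)ˣ, g ∈ s'' → rr g = ↑wu.2 * π ^ wu.1 := by
    intro g
    by_cases hg : g ∈ s''
    · obtain ⟨ww, uu, h⟩ := zp_factor p (hrr0 g hg)
      exact ⟨⟨ww, uu⟩, fun _ => h⟩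
    · exact ⟨⟨0, 1⟩, fun h => absurd h hg⟩
  choose wf hwf using hfacR
  -- tail data
  have hPsG : ∀ g : G, ∃ nmv : ℕ × ℕ, g ∈ sG → ∀ j, UlmSeqOf π g (j + nmv.1) = e (j + nmv.2) := by
    intro g
    by_cases hg : g ∈ sG
    · obtain ⟨m, n, h⟩ := hsGP g hg
      exact ⟨⟨n, m⟩, fun _ j => h j⟩
    · exact ⟨⟨0, 0⟩, fun h => absurd h hg⟩
  choose nm hnm using hPsG
  set I₀ : ℕ := s''.sup (fun g => (nm g).1) with hI₀
  -- basic inequality (I)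
  have hIleq : ∀ y ∈ SB, ∀ i : ℕ, UlmSeqOf π zs i ≤ UlmSeqOf π y (i + (bwf y).1) := by
    intro y hy i
    rw [hzsUY i]
    exact le_of_le_of_eq (Finset.inf_le hy) (hterm _ _ _ (hbwf y hy) i y)
  by_cases hetop : ∃ k, e k = ⊤
  · -- e is eventually ⊤
    obtain ⟨k, hk⟩ := hetop
    have heprop : ∀ j, k ≤ j → e j = ⊤ := by
      intro j hj
      induction j, hj using Nat.le_induction with
      | base => exact hk
      | succ j hj ih => exact (he j).1 ih
    obtain ⟨y₀, hy₀⟩ := hSBne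
    have hUzstop : ∀ i, I₀ + k ≤ i → UlmSeqOf π zs i = ⊤ := by
      intro i hi
      rw [hzsU i, Finset.inf_eq_top_iff]
      intro g hg
      rw [hterm _ _ _ (hwf g hg) i g]
      have hng : (nm g).1 ≤ I₀ := by
        rw [hI₀]; exact Finset.le_sup (f := fun g => (nm g).1) hg
      have hidx : i + (wf g).1 = (i + (wf g).1 - (nm g).1) + (nm g).1 := by omega
      rw [hidx, hnm g (hs''sub hg)]
      exact heprop _ (by omega)
    have hy₀top : ∀ j, (I₀ + k) + (bwf y₀).1 ≤ j → UlmSeqOf π y₀ j = ⊤ := by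
      intro j hj
      have h1 := hIleq y₀ hy₀ (j - (bwf y₀).1)
      rw [hUzstop _ (by omega)] at h1
      have h2 : j - (bwf y₀).1 + (bwf y₀).1 = j := by omega
      rw [h2] at h1
      exact top_le_iff.mp h1
    refine hSBnotP y₀ hy₀ ⟨k, (I₀ + k) + (bwf y₀).1, ?_⟩
    intro i
    rw [hy₀top (i + ((I₀ + k) + (bwf y₀).1)) (by omega), heprop (i + k) (by omega)]
  · -- e is never ⊤
    push_neg at hetop
    have hemono : StrictMono e := strictMono_nat_of_lt_succ (fun i => (he i).2 (hetop i))
    set q : G → ℕ := fun g => (I₀ - (nm g).1) + (wf g).1 + (nm g).2 with hq_def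
    have hq : ∀ g ∈ s'', ∀ t : ℕ, UlmSeqOf π g ((I₀ + t) + (wf g).1) = e (t + q g) := by
      intro g hg t
      have hng : (nm g).1 ≤ I₀ := by
        rw [hI₀]; exact Finset.le_sup (f := fun g => (nm g).1) hg
      have hidx : (I₀ + t) + (wf g).1 = ((I₀ - (nm g).1) + t + (wf g).1) + (nm g).1 := by omega
      rw [hidx, hnm g (hs''sub hg)]
      congr 1
      simp only [hq_def]
      omega
    obtain ⟨x₀, hx₀s, hx₀min⟩ := Finset.exists_min_image s'' q hs''ne
    have hzsU2 : ∀ t : ℕ, UlmSeqOf π zs (I₀ + t) = e (t + q x₀) := by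
      intro t
      rw [hzsU (I₀ + t)]
      apply le_antisymm
      · refine le_trans (Finset.inf_le hx₀s) ?_
        rw [hterm _ _ _ (hwf x₀ hx₀s) _ _, hq x₀ hx₀s t]
      · rw [Finset.le_inf_iff]
        intro g hg
        rw [hterm _ _ _ (hwf g hg) _ _, hq g hg t]
        exact hemono.monotone (by have := hx₀min g hg; omega)
    -- the second expansion: coefficient identity
    set D : Zp p := ∏ y ∈ SB, (acX y).1 with hD
    set dd : G → Zp p := fun y => ∏ y' ∈ SB.erase y, (acX y').1 with hdd
    set θ : G → Zp p := fun x => ∑ y ∈ SB, B y * dd y * (acX y).2 x with hθ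
    set UX : Finset G := SB.biUnion (fun y => (acX y).2.support) with hUX
    have hUXX : ↑UX ⊆ X := by
      intro x hx
      obtain ⟨y, _, hy2⟩ := Finset.mem_biUnion.mp hx
      exact hacXsupp y hy2
    have hDsplit : ∀ y ∈ SB, D = (acX y).1 * dd y := by
      intro y hy
      simp only [hD, hdd]
      exact (Finset.mul_prod_erase SB _ hy).symm
    have hD1 : D • zs = ∑ x ∈ UX, θ x • x := by
      rw [hI1, Finset.smul_sum]
      have step1 : ∀ y ∈ SB, D • (B y • y) = ∑ x ∈ UX, (B y * dd y * (acX y).2 x) • x := by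
        intro y hy
        have hmul : D * B y = B y * dd y * (acX y).1 := by
          rw [hDsplit y hy]; ring
        have ha : D • (B y • y) = (B y * dd y) • ((acX y).1 • y) := by
          rw [smul_smul, smul_smul, hmul, mul_assoc]
        rw [ha, ← hacXsum y, Finsupp.sum, Finset.smul_sum,
          Finset.sum_subset (Finset.subset_biUnion_of_mem (fun y => (acX y).2.support) hy)
            (by intro x _ hx; rw [Finsupp.notMem_support_iff.mp hx, zero_smul, smul_zero])]
        refine Finset.sum_congr rfl ?_
        intro x _
        rw [smul_smul]
      rw [Finset.sum_congr rfl step1, Finset.sum_comm]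
      refine Finset.sum_congr rfl ?_
      intro x _
      rw [← Finset.sum_smul]
    have hD2 : D • zs = ∑ g ∈ s'', (D * rr g) • g := by
      rw [hzs, Finset.smul_sum]
      refine Finset.sum_congr rfl ?_
      intro g _
      rw [smul_smul]
    set W : Finset G := UX ∪ s'' with hW
    have hWX : ↑W ⊆ X := by
      simp only [hW, Finset.coe_union]
      exact Set.union_subset hUXX hs''X
    set lf : G → Zp p :=
      fun x => (if x ∈ UX then θ x else 0) - (if x ∈ s'' then D * rr x else 0) with hlf
    have hWsum : (∑ x ∈ W, lf x • x) = 0 := by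
      have hsplit : ∀ x ∈ W, lf x • x
          = (if x ∈ UX then θ x else 0) • x - (if x ∈ s'' then D * rr x else 0) • x := by
        intro x _
        simp only [hlf, sub_smul]
      rw [Finset.sum_congr rfl hsplit, Finset.sum_sub_distrib]
      have h1 : ∑ x ∈ W, (if x ∈ UX then θ x else 0) • x = ∑ x ∈ UX, θ x • x := by
        rw [← Finset.sum_subset (Finset.subset_union_left (s₂ := s''))
          (fun x _ hx => by rw [if_neg hx, zero_smul])]
        exact Finset.sum_congr rfl (fun x hx => by rw [if_pos hx])
      have h2 : ∑ x ∈ W, (if x ∈ s'' then D * rr x else 0) • x = ∑ x ∈ s'', (D * rr x) • x := by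
        rw [← Finset.sum_subset (Finset.subset_union_right (s₁ := UX))
          (fun x _ hx => by rw [if_neg hx, zero_smul])]
        exact Finset.sum_congr rfl (fun x hx => by rw [if_pos hx])
      rw [h1, h2, ← hD1, ← hD2, sub_self]
    have hcoef : ∀ x ∈ s'', (if x ∈ UX then θ x else 0) = D * rr x := by
      intro x hx
      have h2 := hindep W hWX lf hWsum x (Finset.mem_union_right _ hx)
      simp only [hlf] at h2
      have h3 := sub_eq_zero.mp h2
      rwa [if_pos hx] at h3
    have hD0 : D ≠ 0 := by
      simp only [hD]
      exact Finset.prod_ne_zero_iff.mpr (fun y _ => hacX0 y)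
    have hDr0 : D * rr x₀ ≠ 0 := mul_ne_zero hD0 (hrr0 x₀ hx₀s)
    have hx₀UX : θ x₀ = D * rr x₀ := by
      have h := hcoef x₀ hx₀s
      by_cases hxu : x₀ ∈ UX
      · rwa [if_pos hxu] at h
      · rw [if_neg hxu] at h; exact absurd h.symm hDr0
    obtain ⟨dv', uD, hDfac⟩ := zp_factor p hD0
    have hDrfac : D * rr x₀ = ↑(uD * (wf x₀).2) * π ^ (dv' + (wf x₀).1) := by
      rw [hDfac, hwf x₀ hx₀s, Units.val_mul, pow_add]; ring
    have hy₀ex : ∃ y ∈ SB, ¬ ((π ^ ((dv' + (wf x₀).1) + 1)) ∣ (B y * dd y * (acX y).2 x₀)) := by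
      by_contra hc
      push_neg at hc
      have hdvd : (π ^ ((dv' + (wf x₀).1) + 1)) ∣ θ x₀ := by
        simp only [hθ]
        exact Finset.dvd_sum hc
      rw [hx₀UX, hDrfac] at hdvd
      have := pow_dvd_unit_mul_pow (zp_irred p) (uD * (wf x₀).2) hdvd
      omega
    obtain ⟨y₀, hy₀SB, hy₀ndvd⟩ := hy₀ex
    have hBy₀ : B y₀ ≠ 0 := (Finset.mem_filter.mp hy₀SB).2
    have hdd0 : dd y₀ ≠ 0 := by
      simp only [hdd]
      exact Finset.prod_ne_zero_iff.mpr (fun y _ => hacX0 y)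
    have hcX0 : (acX y₀).2 x₀ ≠ 0 := by
      intro h0
      apply hy₀ndvd
      rw [h0, mul_zero]
      exact dvd_zero _
    obtain ⟨dκ, uκ, hfκ⟩ := zp_factor p hcX0
    obtain ⟨da, ua, hfa⟩ := zp_factor p (hacX0 y₀)
    obtain ⟨dD2, uD2, hfd⟩ := zp_factor p hdd0
    have hDfac2 : D = ↑(ua * uD2) * π ^ (da + dD2) := by
      rw [hDsplit y₀ hy₀SB, hfa, hfd, Units.val_mul, pow_add]; ring
    have hexp : dv' = da + dD2 :=
      IsDiscreteValuationRing.unit_mul_pow_congr_pow (zp_irred p) (zp_irred p) uD (ua * uD2)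
        dv' (da + dD2) (by rw [← hDfac, ← hDfac2])
    have hKEY : (bwf y₀).1 + dκ ≤ da + (wf x₀).1 := by
      have hfact : B y₀ * dd y₀ * (acX y₀).2 x₀
          = ↑((bwf y₀).2 * uD2 * uκ) * π ^ ((bwf y₀).1 + dD2 + dκ) := by
        rw [hbwf y₀ hy₀SB, hfd, hfκ, Units.val_mul, Units.val_mul, pow_add, pow_add]; ring
      by_contra hcon
      push_neg at hcon
      apply hy₀ndvd
      rw [hfact]
      exact Dvd.dvd.mul_left (pow_dvd_pow π (by omega)) _
    have hIIleq : ∀ i : ℕ, UlmSeqOf π y₀ (i + da) ≤ UlmSeqOf π x₀ (i + dκ) := by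
      intro i
      have hLHS : pheight π ((π ^ i * (acX y₀).1) • y₀) = UlmSeqOf π y₀ (i + da) :=
        hterm _ _ _ hfa i y₀
      have hexp2 : (π ^ i * (acX y₀).1) • y₀
          = ∑ x ∈ (acX y₀).2.support, (π ^ i * (acX y₀).2 x) • x := by
        rw [mul_smul, ← hacXsum y₀, Finsupp.sum, Finset.smul_sum]
        refine Finset.sum_congr rfl ?_
        intro x _
        rw [smul_smul]
      have hR := hX.2.2 (acX y₀).2.support (hacXsupp y₀) (fun x => π ^ i * (acX y₀).2 x)
      rw [← hLHS, hexp2, hR]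
      refine le_of_le_of_eq (Finset.inf_le (Finsupp.mem_support_iff.mpr hcX0)) ?_
      exact hterm _ _ _ hfκ i x₀
    have c1 : ∀ j : ℕ, UlmSeqOf π zs (I₀ + (da + (wf x₀).1 + j))
        = e ((da + (wf x₀).1 + j) + q x₀) := fun j => hzsU2 _
    have c3 : ∀ j : ℕ, UlmSeqOf π y₀ ((I₀ + (da + (wf x₀).1 + j)) + (bwf y₀).1)
        ≤ UlmSeqOf π x₀ ((I₀ + ((wf x₀).1 + j) + (bwf y₀).1) + dκ) := by
      intro j
      have h := hIIleq (I₀ + ((wf x₀).1 + j) + (bwf y₀).1)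
      have hidx : (I₀ + ((wf x₀).1 + j) + (bwf y₀).1) + da
          = (I₀ + (da + (wf x₀).1 + j)) + (bwf y₀).1 := by omega
      rwa [hidx] at h
    have c4 : ∀ j : ℕ, UlmSeqOf π x₀ ((I₀ + ((wf x₀).1 + j) + (bwf y₀).1) + dκ)
        = e ((j + (bwf y₀).1 + dκ) + q x₀) := by
      intro j
      have h := hq x₀ hx₀s (j + (bwf y₀).1 + dκ)
      have hidx : (I₀ + (j + (bwf y₀).1 + dκ)) + (wf x₀).1
          = (I₀ + ((wf x₀).1 + j) + (bwf y₀).1) + dκ := by omega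
      rwa [hidx] at h
    have hchain : ∀ j : ℕ, e ((da + (wf x₀).1 + j) + q x₀) ≤ e ((j + (bwf y₀).1 + dκ) + q x₀) := by
      intro j
      calc e ((da + (wf x₀).1 + j) + q x₀)
          = UlmSeqOf π zs (I₀ + (da + (wf x₀).1 + j)) := (c1 j).symm
        _ ≤ UlmSeqOf π y₀ ((I₀ + (da + (wf x₀).1 + j)) + (bwf y₀).1) := hIleq y₀ hy₀SB _
        _ ≤ UlmSeqOf π x₀ ((I₀ + ((wf x₀).1 + j) + (bwf y₀).1) + dκ) := c3 j
        _ = e ((j + (bwf y₀).1 + dκ) + q x₀) := c4 j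
    have heq : da + (wf x₀).1 = (bwf y₀).1 + dκ := by
      have h2 := (hemono.le_iff_le).mp (hchain 0)
      omega
    have hsq : ∀ j : ℕ, UlmSeqOf π y₀ ((I₀ + (da + (wf x₀).1 + j)) + (bwf y₀).1)
        = e ((da + (wf x₀).1 + j) + q x₀) := by
      intro j
      apply le_antisymm
      · refine le_trans (c3 j) ?_
        rw [c4 j]
        apply le_of_eq
        congr 1
        omega
      · rw [← c1 j]
        exact hIleq y₀ hy₀SB _
    refine hSBnotP y₀ hy₀SB
      ⟨(da + (wf x₀).1) + q x₀, (I₀ + (da + (wf x₀).1)) + (bwf y₀).1, ?_⟩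
    intro i
    have h := hsq i
    have hidx1 : i + ((I₀ + (da + (wf x₀).1)) + (bwf y₀).1)
        = (I₀ + (da + (wf x₀).1 + i)) + (bwf y₀).1 := by omega
    have hidx2 : (da + (wf x₀).1 + i) + q x₀ = i + ((da + (wf x₀).1) + q x₀) := by omega
    rw [hidx1, h, hidx2]

end MainKey

theorem statement_19 (p : ℤ) [Fact (Prime p)] {G : Type u} [AddCommGroup G]
    [Module (Zp p) G]
    (X Y : Set G)
    (hX : IsDecompWrt (p : Zp p) X)
    (hXbasis : ∀ g : G, ∃ a : Zp p, a ≠ 0 ∧ a • g ∈ Submodule.span (Zp p) X)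
    (hY : IsDecompWrt (p : Zp p) Y)
    (hYbasis : ∀ g : G, ∃ a : Zp p, a ≠ 0 ∧ a • g ∈ Submodule.span (Zp p) Y)
    (e : ℕ → WithTop Ordinal.{u}) (he : IsUlmSeq e) :
    Cardinal.mk {z : G // z ∈ X ∧ UlmEquiv (UlmSeqOf (p : Zp p) z) e} =
      Cardinal.mk {z : G // z ∈ Y ∧ UlmEquiv (UlmSeqOf (p : Zp p) z) e} :=
  le_antisymm (key_le p X Y hX hXbasis hY hYbasis e he)
    (key_le p Y X hY hYbasis hX hXbasis e he)

end
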